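/- Every element of OR(G) can be realized by rank-one projections and a pure state: if f(x) = Tr(U_x F) > 0 for all x, for projections {U_x} representing G and density operator F, then there exist unit vectors {w_x} with ⟨w_x|w_{x'}⟩ = 0 for distinct non-adjacent x, x', and a unit vector ψ, such that f(x) = |⟨w_x|ψ⟩|² for all x. -/

import Mathlib

open Matrix
open scoped ComplexOrder

noncomputable def IsDensity {d : ℕ} (A : Matrix (Fin d) (Fin d) ℂ) : Prop :=
  A.PosSemidef ∧ A.trace = 1

noncomputable def dotc {Z : Type*} [Fintype Z] (u v : Z → ℂ) : ℂ :=
  ∑ p, star (u p) * v p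

lemma dotc_vec {d : ℕ} (A B : Matrix (Fin d) (Fin d) ℂ) :
    dotc (fun k : Fin (d*d) => A (finProdFinEquiv.symm k).1 (finProdFinEquiv.symm k).2)
         (fun k : Fin (d*d) => B (finProdFinEquiv.symm k).1 (finProdFinEquiv.symm k).2)
      = (Aᴴ * B).trace := by
  unfold dotc
  rw [← Fintype.sum_equiv finProdFinEquiv
      (fun p : Fin d × Fin d => star (A p.1 p.2) * B p.1 p.2)
      (fun k : Fin (d*d) => star (A (finProdFinEquiv.symm k).1 (finProdFinEquiv.symm k).2)
        * B (finProdFinEquiv.symm k).1 (finProdFinEquiv.symm k).2)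
      (by intro p; simp)]
  simp only [Matrix.trace, Matrix.mul_apply, Matrix.conjTranspose_apply, Matrix.diag,
    Fintype.sum_prod_type]
  rw [Finset.sum_comm]

lemma normSq_vec {d : ℕ} (A : Matrix (Fin d) (Fin d) ℂ) :
    ((∑ k : Fin (d*d),
      Complex.normSq (A (finProdFinEquiv.symm k).1 (finProdFinEquiv.symm k).2) : ℝ) : ℂ)
      = (Aᴴ * A).trace := by
  rw [← dotc_vec A A]
  unfold dotc
  push_cast
  congr 1; ext k
  rw [Complex.normSq_eq_conj_mul_self]; rfl

lemma dotc_const_mul_left {Z : Type*} [Fintype Z] (a : ℂ) (u v : Z → ℂ) :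
    dotc (fun k => a * u k) v = star a * dotc u v := by
  unfold dotc
  rw [Finset.mul_sum]
  congr 1; ext k
  rw [star_mul']; ring

lemma dotc_const_mul_right {Z : Type*} [Fintype Z] (b : ℂ) (u v : Z → ℂ) :
    dotc u (fun k => b * v k) = b * dotc u v := by
  unfold dotc
  rw [Finset.mul_sum]
  congr 1; ext k
  ring

/-- every element of `OR(G)` with strictly positive values can be
realized by rank-one projections and a pure state: if `f(x) = Tr(U_x F) > 0` for a
projection representation `{U_x}` of `G` and a density operator `F`, then there are
unit vectors `{w_x}` (orthogonal for distinct non-adjacent vertices) and a unit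
vector `ψ` with `f(x) = |⟨w_x|ψ⟩|²` for all `x`. -/
theorem ORset_rank_one_realization {X : Type*} [Fintype X] (G : SimpleGraph X)
    {d : ℕ} (U : X → Matrix (Fin d) (Fin d) ℂ)
    (hU : ∀ x, (U x).IsHermitian ∧ U x * U x = U x)
    (hrep : ∀ x x', x ≠ x' → ¬ G.Adj x x' → U x * U x' = 0)
    (F : Matrix (Fin d) (Fin d) ℂ) (hF : IsDensity F)
    (f : X → ℝ) (hf : ∀ x, f x = ((U x * F).trace.re))
    (hpos : ∀ x, 0 < f x) :
    ∃ d' : ℕ, ∃ w : X → Fin d' → ℂ, ∃ ψ : Fin d' → ℂ,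
      (∀ x, ∑ i, Complex.normSq (w x i) = 1) ∧
      (∑ i, Complex.normSq (ψ i) = 1) ∧
      (∀ x x', x ≠ x' → ¬ G.Adj x x' → dotc (w x) (w x') = 0) ∧
      (∀ x, f x = Complex.normSq (dotc (w x) ψ)) := by
  obtain ⟨hFpsd, hFtr⟩ := hF
  set S : Matrix (Fin d) (Fin d) ℂ := (open MatrixOrder in CFC.sqrt F) with hS
  have hSherm : Sᴴ = S := (open MatrixOrder in (CFC.sqrt_nonneg F).posSemidef.1)
  have hSS : S * S = F := (open MatrixOrder in CFC.sqrt_mul_sqrt_self F hFpsd.nonneg)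
  -- key trace identity
  have hkey : ∀ x, ((U x * S)ᴴ * (U x * S)).trace = (U x * F).trace := by
    intro x
    rw [conjTranspose_mul, hSherm, (hU x).1.eq]
    calc (S * U x * (U x * S)).trace
        = (S * (U x * U x * S)).trace := by rw [Matrix.mul_assoc, Matrix.mul_assoc]
      _ = (U x * U x * S * S).trace := by rw [Matrix.trace_mul_comm, Matrix.mul_assoc]
      _ = (U x * F).trace := by rw [(hU x).2, Matrix.mul_assoc, hSS]
  -- trace (U x * F) is real and equals f x (as complex)
  have htr : ∀ x, (U x * F).trace = ((f x : ℝ) : ℂ) := by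
    intro x
    have h1 : (U x * F).trace
        = ((∑ k : Fin (d*d), Complex.normSq
            ((U x * S) (finProdFinEquiv.symm k).1 (finProdFinEquiv.symm k).2) : ℝ) : ℂ) := by
      rw [← hkey x, ← normSq_vec (U x * S)]
    rw [h1]
    norm_cast
    rw [hf x, h1, Complex.ofReal_re]
  -- the vectors
  set c : X → ℝ := fun x => Real.sqrt (f x) with hc
  have hcpos : ∀ x, 0 < c x := fun x => Real.sqrt_pos.2 (hpos x)
  refine ⟨d * d,
    fun x k => ((c x)⁻¹ : ℝ) * (U x * S) (finProdFinEquiv.symm k).1 (finProdFinEquiv.symm k).2,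
    fun k => S (finProdFinEquiv.symm k).1 (finProdFinEquiv.symm k).2, ?_, ?_, ?_, ?_⟩
  · intro x
    have := normSq_vec (U x * S)
    rw [hkey x, htr x] at this
    have hsum : (∑ k : Fin (d*d), Complex.normSq
        ((U x * S) (finProdFinEquiv.symm k).1 (finProdFinEquiv.symm k).2)) = f x := by
      exact_mod_cast this
    calc (∑ k : Fin (d*d), Complex.normSq (((c x)⁻¹ : ℝ) *
            (U x * S) (finProdFinEquiv.symm k).1 (finProdFinEquiv.symm k).2))
        = ((c x)⁻¹)^2 * ∑ k : Fin (d*d), Complex.normSq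
            ((U x * S) (finProdFinEquiv.symm k).1 (finProdFinEquiv.symm k).2) := by
          rw [Finset.mul_sum]; congr 1; ext k
          rw [Complex.normSq_mul, Complex.normSq_ofReal, sq]
      _ = 1 := by
          rw [hsum, hc]
          field_simp
          rw [Real.sq_sqrt (le_of_lt (hpos x))]
          exact div_self (ne_of_gt (hpos x))
  · have := normSq_vec S
    rw [hSherm, hSS, hFtr] at this
    exact_mod_cast this
  · intro x x' hne hnadj
    have h0 : dotc (fun k : Fin (d*d) =>
        (U x * S) (finProdFinEquiv.symm k).1 (finProdFinEquiv.symm k).2)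
        (fun k : Fin (d*d) =>
        (U x' * S) (finProdFinEquiv.symm k).1 (finProdFinEquiv.symm k).2) = 0 := by
      rw [dotc_vec, conjTranspose_mul, hSherm, (hU x).1.eq]
      have : S * U x * (U x' * S) = S * (U x * U x') * S := by
        rw [Matrix.mul_assoc, Matrix.mul_assoc, Matrix.mul_assoc]
      rw [this, hrep x x' hne hnadj, Matrix.mul_zero, Matrix.zero_mul, Matrix.trace_zero]
    show dotc (fun k => (((c x)⁻¹ : ℝ) : ℂ) *
        (U x * S) (finProdFinEquiv.symm k).1 (finProdFinEquiv.symm k).2)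
        (fun k => (((c x')⁻¹ : ℝ) : ℂ) *
        (U x' * S) (finProdFinEquiv.symm k).1 (finProdFinEquiv.symm k).2) = 0
    rw [dotc_const_mul_left, dotc_const_mul_right, h0]
    ring
  · intro x
    have h1 : dotc (fun k : Fin (d*d) =>
        (U x * S) (finProdFinEquiv.symm k).1 (finProdFinEquiv.symm k).2)
        (fun k : Fin (d*d) => S (finProdFinEquiv.symm k).1 (finProdFinEquiv.symm k).2)
        = ((f x : ℝ) : ℂ) := by
      rw [dotc_vec, conjTranspose_mul, hSherm, (hU x).1.eq, Matrix.trace_mul_comm,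
        ← Matrix.mul_assoc, hSS, Matrix.trace_mul_comm, htr x]
    show f x = Complex.normSq (dotc (fun k => (((c x)⁻¹ : ℝ) : ℂ) *
        (U x * S) (finProdFinEquiv.symm k).1 (finProdFinEquiv.symm k).2)
        (fun k => S (finProdFinEquiv.symm k).1 (finProdFinEquiv.symm k).2))
    rw [dotc_const_mul_left, h1, Complex.star_def, Complex.conj_ofReal,
      ← Complex.ofReal_mul, Complex.normSq_ofReal, hc]
    have hfx := (hpos x).le
    rw [show ((Real.sqrt (f x))⁻¹ * f x) * ((Real.sqrt (f x))⁻¹ * f x)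
        = (f x * f x) / (Real.sqrt (f x) * Real.sqrt (f x)) by ring,
      Real.mul_self_sqrt hfx]
    field_simp
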